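/- Let f : Finset (Fin n) → ℝ be a normalized, monotone, submodular function, let r < n, and suppose that for every J ⊆ {1,…,n} with |J| = r we have f(univ) - f(J) ≥ c for a fixed constant c ≥ 0. Then f(univ) ≥ (n/(n-r)) · c. -/
import Mathlib

open Finset

private lemma aux_erase_sum {n : ℕ} (f : Finset (Fin n) → ℝ)
    (h0 : f ∅ = 0)
    (hsub : ∀ A B : Finset (Fin n), f (A ∪ B) + f (A ∩ B) ≤ f A + f B) :
    ∀ J : Finset (Fin n), ((J.card : ℝ) - 1) * f J ≤ ∑ i ∈ J, f (J.erase i) := by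
  intro J
  induction J using Finset.induction_on with
  | empty => simp [h0]
  | @insert j J' hj ih =>
    have hcard : (insert j J').card = J'.card + 1 := Finset.card_insert_of_notMem hj
    rw [Finset.sum_insert hj, Finset.erase_insert hj, hcard]
    have hrw : ∀ i ∈ J', f ((insert j J').erase i) = f (insert j (J'.erase i)) := by
      intro i hi
      have : i ≠ j := fun h => hj (h ▸ hi)
      rw [Finset.erase_insert_of_ne this.symm]
    rw [Finset.sum_congr rfl hrw]
    have hpt : ∀ i ∈ J', f (insert j J') + f (J'.erase i) - f J' ≤ f (insert j (J'.erase i)) := by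
      intro i hi
      have hu : insert j (J'.erase i) ∪ J' = insert j J' := by
        ext x
        simp only [Finset.mem_union, Finset.mem_insert, Finset.mem_erase]
        constructor
        · rintro (⟨h | ⟨_, h⟩⟩ | h) <;> tauto
        · rintro (h | h)
          · tauto
          · by_cases hx : x = i
            · right; exact hx ▸ hi
            · left; right; exact ⟨hx, h⟩
      have hi2 : insert j (J'.erase i) ∩ J' = J'.erase i := by
        ext x
        simp only [Finset.mem_inter, Finset.mem_insert, Finset.mem_erase]
        constructor
        · rintro ⟨h | h, hx⟩
          · exact absurd (h ▸ hx) hj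
          · exact h
        · intro h; exact ⟨Or.inr h, h.2⟩
      have := hsub (insert j (J'.erase i)) J'
      rw [hu, hi2] at this
      linarith
    have hA : ∑ i ∈ J', (f (insert j J') + f (J'.erase i) - f J')
        ≤ ∑ i ∈ J', f (insert j (J'.erase i)) := Finset.sum_le_sum hpt
    have hB : ∑ i ∈ J', (f (insert j J') + f (J'.erase i) - f J')
        = (J'.card : ℝ) * (f (insert j J') - f J') + ∑ i ∈ J', f (J'.erase i) := by
      rw [Finset.sum_sub_distrib, Finset.sum_add_distrib, Finset.sum_const, Finset.sum_const]
      push_cast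
      ring
    push_cast
    linarith

private lemma aux_swap {n k : ℕ} (f : Finset (Fin n) → ℝ) (hk : 1 ≤ k) :
    ∑ J ∈ powersetCard k (univ : Finset (Fin n)), ∑ i ∈ J, f (J.erase i)
      = ∑ K ∈ powersetCard (k - 1) (univ : Finset (Fin n)), ((n - (k - 1) : ℕ) : ℝ) * f K := by
  have lhs : ∑ J ∈ powersetCard k (univ : Finset (Fin n)), ∑ i ∈ J, f (J.erase i)
      = ∑ x ∈ (powersetCard k (univ : Finset (Fin n))).sigma (fun J => J), f (x.1.erase x.2) := by
    rw [Finset.sum_sigma]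
  have rhs : ∑ K ∈ powersetCard (k - 1) (univ : Finset (Fin n)), ((n - (k - 1) : ℕ) : ℝ) * f K
      = ∑ y ∈ (powersetCard (k - 1) (univ : Finset (Fin n))).sigma (fun K => Kᶜ), f y.1 := by
    rw [Finset.sum_sigma]
    apply Finset.sum_congr rfl
    intro K hK
    have hKc : K.card = k - 1 := (Finset.mem_powersetCard.mp hK).2
    have : ∑ _s ∈ Kᶜ, f K = ((n - (k - 1) : ℕ) : ℝ) * f K := by
      rw [Finset.sum_const, Finset.card_compl, hKc, Fintype.card_fin, nsmul_eq_mul]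
    exact this.symm
  rw [lhs, rhs]
  apply Finset.sum_nbij' (i := fun x => (⟨x.1.erase x.2, x.2⟩ : Σ _ : Finset (Fin n), Fin n))
    (j := fun y => (⟨insert y.2 y.1, y.2⟩ : Σ _ : Finset (Fin n), Fin n))
  · intro x hx
    simp only [Finset.mem_sigma, Finset.mem_powersetCard] at hx ⊢
    obtain ⟨⟨_, hcard⟩, hmem⟩ := hx
    refine ⟨⟨Finset.subset_univ _, ?_⟩, ?_⟩
    · rw [Finset.card_erase_of_mem hmem, hcard]
    · simp
  · intro y hy
    simp only [Finset.mem_sigma, Finset.mem_powersetCard, Finset.mem_compl] at hy ⊢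
    obtain ⟨⟨_, hcard⟩, hmem⟩ := hy
    refine ⟨⟨Finset.subset_univ _, ?_⟩, Finset.mem_insert_self _ _⟩
    rw [Finset.card_insert_of_notMem hmem, hcard]
    omega
  · intro x hx
    simp only [Finset.mem_sigma] at hx
    simp [Finset.insert_erase hx.2]
  · intro y hy
    simp only [Finset.mem_sigma, Finset.mem_compl] at hy
    simp [Finset.erase_insert hy.2]
  · intro x hx
    rfl

private lemma aux_han {n : ℕ} (f : Finset (Fin n) → ℝ)
    (h0 : f ∅ = 0)
    (hsub : ∀ A B : Finset (Fin n), f (A ∪ B) + f (A ∩ B) ≤ f A + f B) :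
    ∀ j : ℕ, j ≤ n →
      ((n - j : ℕ) : ℝ) * (n.choose (n - j) : ℝ) * f univ
        ≤ (n : ℝ) * ∑ J ∈ powersetCard (n - j) (univ : Finset (Fin n)), f J := by
  intro j
  induction j with
  | zero =>
    intro _
    simp only [Nat.sub_zero, Nat.choose_self, Nat.cast_one]
    rw [show (powersetCard n (univ : Finset (Fin n))) = {univ} from by
      simpa using Finset.powersetCard_self (Finset.univ : Finset (Fin n))]
    simp
  | succ j ih =>
    intro hj1
    have hjn : j ≤ n := Nat.le_of_succ_le hj1
    set k := n - j with hk
    have hk1 : 1 ≤ k := by omega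
    have hkn : k ≤ n := by omega
    have hkk : n - (j + 1) = k - 1 := by omega
    set m := n - (k - 1) with hm
    have hm1 : 1 ≤ m := by omega
    rw [hkk]
    set S1 := ∑ J ∈ powersetCard (k - 1) (univ : Finset (Fin n)), f J with hS1
    set Sk := ∑ J ∈ powersetCard k (univ : Finset (Fin n)), f J with hSk
    have hB : ((k : ℝ) - 1) * Sk ≤ (m : ℝ) * S1 := by
      have step1 : ((k : ℝ) - 1) * Sk
          ≤ ∑ J ∈ powersetCard k (univ : Finset (Fin n)), ∑ i ∈ J, f (J.erase i) := by
        rw [hSk, Finset.mul_sum]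
        apply Finset.sum_le_sum
        intro J hJ
        have hJc : J.card = k := (Finset.mem_powersetCard.mp hJ).2
        have := aux_erase_sum f h0 hsub J
        rw [hJc] at this
        exact this
      rw [aux_swap f hk1, ← hm, ← Finset.mul_sum] at step1
      exact step1
    have ihk : (k : ℝ) * (n.choose k : ℝ) * f univ ≤ (n : ℝ) * Sk := ih hjn
    have hchoose : (n.choose k : ℝ) * (k : ℝ) = (n.choose (k - 1) : ℝ) * (m : ℝ) := by
      have : n.choose ((k - 1) + 1) * ((k - 1) + 1) = n.choose (k - 1) * (n - (k - 1)) :=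
        Nat.choose_succ_right_eq n (k - 1)
      rw [show k - 1 + 1 = k from by omega] at this
      exact_mod_cast this
    have hmpos : (0 : ℝ) < (m : ℝ) := by exact_mod_cast hm1
    rw [Nat.cast_sub hk1, Nat.cast_one]
    have key : (m : ℝ) * (((k : ℝ) - 1) * (n.choose (k - 1) : ℝ) * f univ)
        ≤ (m : ℝ) * ((n : ℝ) * S1) := by
      have t1 : ((k : ℝ) - 1) * ((k : ℝ) * (n.choose k : ℝ) * f univ)
          ≤ ((k : ℝ) - 1) * ((n : ℝ) * Sk) := by
        apply mul_le_mul_of_nonneg_left ihk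
        have : (1 : ℝ) ≤ (k : ℝ) := by exact_mod_cast hk1
        linarith
      have t2 : (n : ℝ) * (((k : ℝ) - 1) * Sk) ≤ (n : ℝ) * ((m : ℝ) * S1) := by
        apply mul_le_mul_of_nonneg_left hB
        positivity
      calc (m : ℝ) * (((k : ℝ) - 1) * (n.choose (k - 1) : ℝ) * f univ)
          = ((k : ℝ) - 1) * ((n.choose (k - 1) : ℝ) * (m : ℝ) * f univ) := by ring
        _ = ((k : ℝ) - 1) * ((n.choose k : ℝ) * (k : ℝ) * f univ) := by rw [← hchoose]
        _ = ((k : ℝ) - 1) * ((k : ℝ) * (n.choose k : ℝ) * f univ) := by ring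
        _ ≤ ((k : ℝ) - 1) * ((n : ℝ) * Sk) := t1
        _ = (n : ℝ) * (((k : ℝ) - 1) * Sk) := by ring
        _ ≤ (n : ℝ) * ((m : ℝ) * S1) := t2
        _ = (m : ℝ) * ((n : ℝ) * S1) := by ring
    exact le_of_mul_le_mul_left key hmpos

theorem polymatroid_lower_bound {n : ℕ} (f : Finset (Fin n) → ℝ)
    (h0 : f ∅ = 0)
    (hmono : ∀ A B : Finset (Fin n), A ⊆ B → f A ≤ f B)
    (hsub : ∀ A B : Finset (Fin n), f (A ∪ B) + f (A ∩ B) ≤ f A + f B)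
    (r : ℕ) (h1 : 1 ≤ r) (h2 : r < n) (c : ℝ) (hc : 0 ≤ c)
    (hgap : ∀ J : Finset (Fin n), J.card = r → f univ - f J ≥ c) :
    f univ ≥ ((n : ℝ) / ((n : ℝ) - (r : ℝ))) * c := by
  have hrn : r ≤ n := le_of_lt h2
  have hhan := aux_han f h0 hsub (n - r) (by omega)
  rw [show n - (n - r) = r from by omega] at hhan
  set S := ∑ J ∈ powersetCard r (univ : Finset (Fin n)), f J with hS
  have hSle : S ≤ (n.choose r : ℝ) * (f univ - c) := by
    rw [hS]
    calc ∑ J ∈ powersetCard r (univ : Finset (Fin n)), f J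
        ≤ ∑ _J ∈ powersetCard r (univ : Finset (Fin n)), (f univ - c) := by
          apply Finset.sum_le_sum
          intro J hJ
          have hJc : J.card = r := (Finset.mem_powersetCard.mp hJ).2
          have := hgap J hJc
          linarith
      _ = (n.choose r : ℝ) * (f univ - c) := by
          rw [Finset.sum_const, Finset.card_powersetCard, Finset.card_univ, Fintype.card_fin,
            nsmul_eq_mul]
  have hCpos : (0 : ℝ) < (n.choose r : ℝ) := by exact_mod_cast Nat.choose_pos hrn
  have key : (n.choose r : ℝ) * ((r : ℝ) * f univ) ≤ (n.choose r : ℝ) * ((n : ℝ) * (f univ - c)) := by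
    have t1 : (n : ℝ) * S ≤ (n : ℝ) * ((n.choose r : ℝ) * (f univ - c)) := by
      apply mul_le_mul_of_nonneg_left hSle
      positivity
    calc (n.choose r : ℝ) * ((r : ℝ) * f univ)
        = (r : ℝ) * (n.choose r : ℝ) * f univ := by ring
      _ ≤ (n : ℝ) * S := hhan
      _ ≤ (n : ℝ) * ((n.choose r : ℝ) * (f univ - c)) := t1
      _ = (n.choose r : ℝ) * ((n : ℝ) * (f univ - c)) := by ring
  have hfin : (r : ℝ) * f univ ≤ (n : ℝ) * (f univ - c) := le_of_mul_le_mul_left key hCpos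
  have hnr : (0 : ℝ) < (n : ℝ) - (r : ℝ) := by
    have : (r : ℝ) < (n : ℝ) := by exact_mod_cast h2
    linarith
  rw [ge_iff_le, div_mul_eq_mul_div, div_le_iff₀ hnr]
  nlinarith
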